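/- Let D be a decoherence map on a nonempty compact convex set Ω in a finite-dimensional real vector space V, let s₁, …, sₙ (n ≥ 1) be distinct extreme points of D(Ω), suppose C := convexHull{s₁, …, sₙ} is a face of D(Ω), and let m := (1/n) • (s₁ + ⋯ + sₙ). Let E : V → ℝ be a linear functional with E(D(s)) = E(s) for all s ∈ Ω, E(s) ≥ 0 for all s ∈ Ω, and such that for y ∈ D(Ω), E(y) = 0 if and only if y ∈ C. Then {s ∈ Ω | E(s) = 0} = Ref(m); in particular Ref(m) is an exposed face of Ω. -/

import Mathlib

/-- `s` refines `x` (written `s ≻ x`) relative to the convex set `Ω`: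
there exist `p ∈ (0,1]` and `t ∈ Ω` with `x = p • s + (1-p) • t`. -/
def Refines {V : Type*} [AddCommGroup V] [Module ℝ V] (Ω : Set V) (s x : V) : Prop :=
  ∃ p : ℝ, 0 < p ∧ p ≤ 1 ∧ ∃ t ∈ Ω, x = p • s + (1 - p) • t

/-- The refinement set of `x` in `Ω`: all states of `Ω` refining `x`. -/
def RefSet {V : Type*} [AddCommGroup V] [Module ℝ V] (Ω : Set V) (x : V) : Set V :=
  {s ∈ Ω | Refines Ω s x}

/-- `F` is a face of `Ω`: a convex subset of `Ω` closed under refinement. -/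
def IsFaceOf {V : Type*} [AddCommGroup V] [Module ℝ V] (F Ω : Set V) : Prop :=
  F ⊆ Ω ∧ Convex ℝ F ∧ ∀ s' ∈ F, ∀ s ∈ Ω, Refines Ω s s' → s ∈ F

/-- A decoherence map on `Ω`: a linear map sending `Ω` into itself, idempotent
on `Ω`, and purity-decreasing (if `D ρ ≻ ρ` then `ρ ≻ D ρ`). -/
def IsDecoherence {V : Type*} [AddCommGroup V] [Module ℝ V]
    (Ω : Set V) (D : V →ₗ[ℝ] V) : Prop :=
  D '' Ω ⊆ Ω ∧ (∀ s ∈ Ω, D (D s) = D s) ∧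
    ∀ ρ ∈ Ω, Refines Ω (D ρ) ρ → Refines Ω ρ (D ρ)

/-- with `C = conv{s₁,…,sₙ}` a face of `D '' Ω` and `m` the uniform
mixture of the distinct extreme points `sᵢ`, a decoherence-invariant linear
functional `E`, nonnegative on `Ω` and vanishing on `D '' Ω` exactly on `C`,
vanishes on `Ω` exactly on `Ref(m)`; in particular `Ref(m)` is an exposed face. -/
theorem refSet_of_mixture_exposed {V : Type*} [NormedAddCommGroup V]
    [NormedSpace ℝ V] [FiniteDimensional ℝ V]
    (Ω : Set V) (hne : Ω.Nonempty) (hcomp : IsCompact Ω) (hconv : Convex ℝ Ω)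
    (D : V →ₗ[ℝ] V) (hD : IsDecoherence Ω D)
    (n : ℕ) (hn : 1 ≤ n) (s : Fin n → V) (hinj : Function.Injective s)
    (hext : ∀ i, s i ∈ (D '' Ω).extremePoints ℝ)
    (C : Set V) (hC : C = convexHull ℝ (Set.range s))
    (hface : IsFaceOf C (D '' Ω))
    (m : V) (hm : m = (1 / (n : ℝ)) • ∑ i, s i)
    (E : V →ₗ[ℝ] ℝ)
    (hED : ∀ x ∈ Ω, E (D x) = E x)
    (hEpos : ∀ x ∈ Ω, 0 ≤ E x)
    (hEzero : ∀ y ∈ D '' Ω, (E y = 0 ↔ y ∈ C)) :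
    {x ∈ Ω | E x = 0} = RefSet Ω m := by
  obtain ⟨hDΩ, hDidem, hDpur⟩ := hD
  have hn0 : (0:ℝ) < n := by exact_mod_cast hn
  have hn1 : (1:ℝ) ≤ n := by exact_mod_cast hn
  have hCsub : C ⊆ Ω := fun y hy => hDΩ (hface.1 hy)
  -- m ∈ C
  have hmC : m ∈ C := by
    rw [hC, hm, Finset.smul_sum]
    refine (convex_convexHull ℝ _).sum_mem (fun i _ => by positivity) ?_
      (fun i _ => subset_convexHull ℝ _ (Set.mem_range_self i))
    rw [Finset.sum_const, Finset.card_univ, Fintype.card_fin, nsmul_eq_mul]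
    field_simp
  have hmΩ : m ∈ Ω := hCsub hmC
  ext x
  simp only [Set.mem_setOf_eq, RefSet, Set.mem_sep_iff]
  constructor
  · rintro ⟨hx, hEx⟩
    refine ⟨hx, ?_⟩
    -- D x ∈ C
    have hDxΩ : D x ∈ Ω := hDΩ ⟨x, hx, rfl⟩
    have hDxC : D x ∈ C := (hEzero _ ⟨x, hx, rfl⟩).mp ((hED x hx).trans hEx)
    -- weights for D x
    rw [hC, convexHull_range_eq_exists_affineCombination] at hDxC
    obtain ⟨F, w, hw0, hw1, hwx⟩ := hDxC
    rw [Finset.affineCombination_eq_linear_combination _ _ _ hw1] at hwx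
    set q : Fin n → ℝ := fun i => if i ∈ F then w i else 0 with hq
    have hq0 : ∀ i, 0 ≤ q i := by
      intro i; simp only [hq]; split
      · exact hw0 _ ‹_›
      · exact le_refl _
    have hq1 : ∑ i, q i = 1 := by
      rw [hq, Finset.sum_ite_mem, Finset.univ_inter, hw1]
    have hqx : ∑ i, q i • s i = D x := by
      rw [← hwx]
      simp only [hq, ite_smul, zero_smul]
      rw [Finset.sum_ite_mem, Finset.univ_inter]
    have hqle : ∀ i, q i ≤ 1 := by
      intro i
      calc q i ≤ ∑ j, q j := Finset.single_le_sum (fun j _ => hq0 j) (Finset.mem_univ i)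
      _ = 1 := hq1
    set p : ℝ := 1 / (2 * n) with hp
    have hp0 : 0 < p := by positivity
    have hp2 : p ≤ 1/2 := by
      rw [hp, div_le_div_iff₀ (by positivity) (by norm_num)]
      nlinarith [hn1]
    have h1p : (0:ℝ) < 1 - p := by linarith
    set c : Fin n → ℝ := fun i => (1/(1-p)) * (1/(n:ℝ) - p * q i) with hc
    have hcn : ∀ i, 0 ≤ c i := by
      intro i
      have : p * q i ≤ 1/(n:ℝ) := by
        calc p * q i ≤ p * 1 := by nlinarith [hq0 i, hqle i]
        _ ≤ 1/(n:ℝ) := by rw [mul_one, hp, div_le_div_iff₀ (by positivity) hn0]; nlinarith [hn1]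
      have h1 : (0:ℝ) ≤ 1/(1-p) := by positivity
      simp only [hc]
      exact mul_nonneg h1 (by linarith)
    have hcs : ∑ i, c i = 1 := by
      rw [hc]
      rw [← Finset.mul_sum]
      rw [Finset.sum_sub_distrib, ← Finset.mul_sum, hq1, Finset.sum_const,
        Finset.card_univ, Fintype.card_fin, nsmul_eq_mul]
      field_simp
    set t' : V := ∑ i, c i • s i with ht'
    have ht'C : t' ∈ C := by
      rw [hC]
      exact (convex_convexHull ℝ _).sum_mem (fun i _ => hcn i) hcs
        (fun i _ => subset_convexHull ℝ _ (Set.mem_range_self i))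
    have hkey : m = p • D x + (1 - p) • t' := by
      rw [hm, ← hqx, ht', Finset.smul_sum, Finset.smul_sum, Finset.smul_sum,
        ← Finset.sum_add_distrib]
      refine Finset.sum_congr rfl fun i _ => ?_
      rw [smul_smul, smul_smul, ← add_smul]
      congr 1
      rw [hc]
      field_simp
      ring
    clear hc ht' hq hqx hwx hw1 hw0
    clear_value t' c q
    -- x refines D x via purity decrease
    have hrefxDx : Refines Ω x (D x) := by
      set ρ : V := (1/2:ℝ) • x + (1/2:ℝ) • D x with hρ
      have hρΩ : ρ ∈ Ω := hconv hx hDxΩ (by norm_num) (by norm_num) (by norm_num)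
      have hDρ : D ρ = D x := by
        rw [hρ, map_add, map_smul, map_smul, hDidem x hx, ← add_smul]
        norm_num
      have hpre : Refines Ω (D ρ) ρ :=
        ⟨1/2, by norm_num, by norm_num, x, hx, by rw [hDρ, hρ]; norm_num; module⟩
      obtain ⟨r, hr0, hr1, u, huΩ, heq⟩ := hDpur ρ hρΩ hpre
      rw [hDρ, hρ] at heq
      have h2 : (0:ℝ) < 1 - r/2 := by linarith
      set p' : ℝ := (r/2)/(1 - r/2) with hp'
      have hp'0 : 0 < p' := by positivity
      have hp'1 : p' ≤ 1 := by
        rw [hp', div_le_one h2]; linarith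
      refine ⟨p', hp'0, hp'1, u, huΩ, ?_⟩
      have key : (1 - r/2) • D x = (r/2) • x + (1 - r) • u := by
        rw [smul_add, smul_smul, smul_smul] at heq
        linear_combination (norm := module) heq
      have ha : (1 - r/2) * p' = r/2 := by
        rw [hp', mul_comm, div_mul_cancel₀ _ h2.ne']
      have hb : (1 - r/2) * (1 - p') = 1 - r := by
        rw [mul_sub, mul_one, ha]; ring
      have : (1 - r/2) • (p' • x + (1 - p') • u) = (1 - r/2) • D x := by
        rw [key, smul_add, smul_smul, smul_smul, ha, hb]
      exact (smul_right_injective V h2.ne' this).symm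
    -- combine
    obtain ⟨p', hp'0, hp'1, u, huΩ, hequ⟩ := hrefxDx
    have hpp' : p * p' ≤ 1/2 := by nlinarith
    have hpp'0 : 0 < p * p' := by positivity
    have h1pp : (0:ℝ) < 1 - p * p' := by linarith
    set a : ℝ := p * (1 - p') / (1 - p * p') with hA
    set b : ℝ := (1 - p) / (1 - p * p') with hB
    have ha0 : 0 ≤ a := by
      apply div_nonneg _ h1pp.le
      nlinarith
    have hb0 : 0 ≤ b := div_nonneg h1p.le h1pp.le
    have hab : a + b = 1 := by
      rw [hA, hB, ← add_div, div_eq_one_iff_eq h1pp.ne']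
      ring
    have ha' : (1 - p * p') * a = p * (1 - p') := by
      rw [hA, mul_comm, div_mul_cancel₀ _ h1pp.ne']
    have hb' : (1 - p * p') * b = 1 - p := by
      rw [hB, mul_comm, div_mul_cancel₀ _ h1pp.ne']
    clear hA hB
    clear_value a b
    refine ⟨p * p', hpp'0, by linarith, a • u + b • t',
      hconv huΩ (hCsub ht'C) ha0 hb0 hab, ?_⟩
    have hsplit : (1 - p * p') • (a • u + b • t') = (p * (1 - p')) • u + (1 - p) • t' := by
      rw [smul_add, smul_smul, smul_smul, ha', hb']
    rw [hsplit, hkey, hequ]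
    module
  · rintro ⟨hx, p, hp0, hp1, t, htΩ, heq⟩
    refine ⟨hx, ?_⟩
    have hEm : E m = 0 := (hEzero m (hface.1 hmC)).mpr hmC
    have : (0:ℝ) = p * E x + (1 - p) * E t := by
      rw [← hEm, heq]; simp [mul_comm]
    nlinarith [hEpos x hx, hEpos t htΩ, hEpos m hmΩ]
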